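/- For a differential k-chain J in the completion B̂_k^r and r ≥ 0, the norm ‖J‖_{B^r} is attained by testing against forms one degree smoother: ‖J‖_{B^r} = sup{|ω(J)|/‖ω‖_{B^r} : 0 ≠ ω of class B^{r+1}}. -/

import Mathlib

noncomputable section

open Finsupp Filter

variable {E W : Type*} [NormedAddCommGroup E] [NormedSpace ℝ E]
  [NormedAddCommGroup W] [NormedSpace ℝ W]

/-- Translation of a Dirac chain through the vector `u`. -/
def transl (u : E) (A : E →₀ W) : E →₀ W := Finsupp.mapDomain (· + u) A

/-- The difference operator `Δ_u = T_u - I`. -/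
def del (u : E) (A : E →₀ W) : E →₀ W := transl u A - A

/-- Iterated difference chain along a list of vectors. -/
def diff : List E → (E →₀ W) → (E →₀ W)
  | [], A => A
  | u :: σ, A => del u (diff σ A)

/-- The product of the norms of the vectors in the list `σ`. -/
def lnorm (σ : List E) : ℝ := (σ.map norm).prod

/-- Costs of representations of `A` as sums of `j`-difference chains with `j ≤ r`. -/
def reps (r : ℕ) (A : E →₀ W) : Set ℝ :=
  {c | ∃ (m : ℕ) (σ : Fin m → List E) (p : Fin m → E) (α : Fin m → W),
      (∀ i, (σ i).length ≤ r) ∧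
      A = ∑ i, diff (σ i) (Finsupp.single (p i) (α i)) ∧
      c = ∑ i, lnorm (σ i) * ‖α i‖}

/-- The `B^r` norm of a Dirac chain. -/
def Bnorm (r : ℕ) (A : E →₀ W) : ℝ := sInf (reps r A)

/-- `M` is a `B^r`-bound for the cochain (differential form) `ω`. -/
def IsFormBound (r : ℕ) (ω : (E →₀ W) →ₗ[ℝ] ℝ) (M : ℝ) : Prop :=
  ∀ (σ : List E) (p : E) (α : W), σ.length ≤ r →
    |ω (diff σ (Finsupp.single p α))| ≤ M * lnorm σ * ‖α‖

/-- The `B^r` norm of a differential form. -/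
def formNorm (r : ℕ) (ω : (E →₀ W) →ₗ[ℝ] ℝ) : ℝ :=
  sInf {M | 0 ≤ M ∧ IsFormBound r ω M}

/- ## basic lemmas -/

lemma transl_single (u p : E) (α : W) :
    transl u (Finsupp.single p α) = Finsupp.single (p + u) α := by
  simp [transl, Finsupp.mapDomain_single]

lemma transl_add (u : E) (A B : E →₀ W) :
    transl u (A + B) = transl u A + transl u B := Finsupp.mapDomain_add

lemma transl_sub (u : E) (A B : E →₀ W) :
    transl u (A - B) = transl u A - transl u B :=
  (Finsupp.mapDomain.addMonoidHom (· + u)).map_sub A B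

lemma transl_transl (u v : E) (A : E →₀ W) :
    transl u (transl v A) = transl (v + u) A := by
  rw [transl, transl, transl, ← Finsupp.mapDomain_comp]
  congr 1
  funext x
  simp [add_assoc]

lemma transl_zero (A : E →₀ W) : transl (0 : E) A = A := by
  have h : (fun x : E => x + 0) = id := by funext x; simp
  rw [transl]
  show Finsupp.mapDomain (fun x => x + 0) A = A
  rw [h, Finsupp.mapDomain_id]

lemma del_transl (v u : E) (A : E →₀ W) :
    del v (transl u A) = transl u (del v A) := by
  simp [del, transl_sub, transl_transl, add_comm]

lemma diff_transl (σ : List E) (u : E) (A : E →₀ W) :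
    diff σ (transl u A) = transl u (diff σ A) := by
  induction σ with
  | nil => rfl
  | cons v σ ih => simp [diff, ih, del_transl]

lemma transl_diff_single (σ : List E) (u p : E) (α : W) :
    transl u (diff σ (Finsupp.single p α)) = diff σ (Finsupp.single (p + u) α) := by
  rw [← diff_transl, transl_single]

lemma del_add_vec (a b : E) (A : E →₀ W) :
    del (a + b) A = del a (transl b A) + del b A := by
  simp [del, transl_transl, add_comm a b]

lemma lnorm_nonneg (σ : List E) : 0 ≤ lnorm σ := by
  apply List.prod_nonneg
  intro x hx
  simp only [List.mem_map] at hx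
  obtain ⟨y, _, rfl⟩ := hx
  exact norm_nonneg y

lemma lnorm_nil : lnorm ([] : List E) = 1 := by simp [lnorm]

lemma lnorm_cons (u : E) (σ : List E) : lnorm (u :: σ) = ‖u‖ * lnorm σ := by
  simp [lnorm]

/- ## reps -/

lemma sum_single_eq (A : E →₀ W) :
    A = ∑ i : Fin A.support.card,
      Finsupp.single ((A.support.equivFin.symm i) : E) (A ((A.support.equivFin.symm i) : E)) := by
  have h1 : ∑ i : Fin A.support.card,
      Finsupp.single ((A.support.equivFin.symm i) : E) (A ((A.support.equivFin.symm i) : E))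
      = ∑ x : A.support, Finsupp.single (x : E) (A x) :=
    Equiv.sum_comp A.support.equivFin.symm (fun x : A.support => Finsupp.single (x : E) (A x))
  rw [h1, Finset.sum_coe_sort A.support (fun p => Finsupp.single p (A p))]
  exact (Finsupp.sum_single A).symm

lemma reps_nonempty (r : ℕ) (A : E →₀ W) : (reps r A).Nonempty := by
  refine ⟨∑ i : Fin A.support.card, lnorm ([] : List E) * ‖A ((A.support.equivFin.symm i) : E)‖,
    A.support.card, fun _ => [], fun i => ((A.support.equivFin.symm i) : E),
    fun i => A ((A.support.equivFin.symm i) : E), fun i => by simp, ?_, rfl⟩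
  simpa [diff] using sum_single_eq A

lemma reps_nonneg (r : ℕ) (A : E →₀ W) : ∀ c ∈ reps r A, 0 ≤ c := by
  rintro c ⟨m, σ, p, α, -, -, rfl⟩
  exact Finset.sum_nonneg fun i _ => mul_nonneg (lnorm_nonneg _) (norm_nonneg _)

lemma Bnorm_nonneg (r : ℕ) (A : E →₀ W) : 0 ≤ Bnorm r A :=
  Real.sInf_nonneg (reps_nonneg r A)

lemma Bnorm_le_of_mem {r : ℕ} {A : E →₀ W} {c : ℝ} (hc : c ∈ reps r A) : Bnorm r A ≤ c :=
  csInf_le ⟨0, reps_nonneg r A⟩ hc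

lemma Bnorm_diff_single_le {r : ℕ} {σ : List E} (hσ : σ.length ≤ r) (p : E) (α : W) :
    Bnorm r (diff σ (Finsupp.single p α)) ≤ lnorm σ * ‖α‖ := by
  refine Bnorm_le_of_mem (c := lnorm σ * ‖α‖) ?_
  exact ⟨1, fun _ => σ, fun _ => p, fun _ => α, fun _ => hσ, by simp, by simp⟩

/- ## forms vs Bnorm -/

lemma abs_le_mul_Bnorm {r : ℕ} {ω : (E →₀ W) →ₗ[ℝ] ℝ} {M : ℝ} (hM : 0 ≤ M)
    (h : IsFormBound r ω M) (A : E →₀ W) : |ω A| ≤ M * Bnorm r A := by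
  have key : ∀ c ∈ reps r A, |ω A| ≤ M * c := by
    rintro c ⟨m, σ, p, α, hlen, hA, rfl⟩
    rw [hA, map_sum]
    calc |∑ i, ω (diff (σ i) (Finsupp.single (p i) (α i)))|
        ≤ ∑ i, |ω (diff (σ i) (Finsupp.single (p i) (α i)))| := Finset.abs_sum_le_sum_abs _ _
      _ ≤ ∑ i, M * (lnorm (σ i) * ‖α i‖) := by
          refine Finset.sum_le_sum fun i _ => ?_
          rw [← mul_assoc]; exact h _ _ _ (hlen i)
      _ = M * ∑ i, lnorm (σ i) * ‖α i‖ := by rw [Finset.mul_sum]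
  rcases eq_or_lt_of_le hM with hM0 | hM0
  · obtain ⟨c, hc⟩ := reps_nonempty r A
    have h2 := key c hc
    rw [← hM0, zero_mul] at h2 ⊢
    exact h2
  · rw [← div_le_iff₀' hM0]
    refine le_csInf (reps_nonempty r A) fun c hc => ?_
    rw [div_le_iff₀' hM0]
    exact key c hc

lemma isFormBound_anti {r s : ℕ} {ω : (E →₀ W) →ₗ[ℝ] ℝ} {M : ℝ} (hrs : r ≤ s)
    (h : IsFormBound s ω M) : IsFormBound r ω M :=
  fun σ p α hσ => h σ p α (hσ.trans hrs)

lemma formNorm_nonneg {r : ℕ} (ω : (E →₀ W) →ₗ[ℝ] ℝ) : 0 ≤ formNorm r ω :=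
  Real.sInf_nonneg fun _ h => h.1

lemma formNorm_isFormBound {r : ℕ} {ω : (E →₀ W) →ₗ[ℝ] ℝ}
    (hne : ∃ M, 0 ≤ M ∧ IsFormBound r ω M) : IsFormBound r ω (formNorm r ω) := by
  intro σ p α hσ
  rw [mul_assoc]
  set c := lnorm σ * ‖α‖ with hc
  have hc0 : 0 ≤ c := mul_nonneg (lnorm_nonneg _) (norm_nonneg _)
  rcases eq_or_lt_of_le hc0 with h0 | h0
  · obtain ⟨M, hM0, hM⟩ := hne
    have := hM σ p α hσ
    rw [mul_assoc, ← hc, ← h0, mul_zero] at this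
    rw [← h0, mul_zero]; exact this
  · rw [← div_le_iff₀ h0]
    refine le_csInf hne fun M hM => ?_
    rw [div_le_iff₀ h0]
    have := hM.2 σ p α hσ
    rwa [mul_assoc, ← hc] at this

lemma formNorm_le {r : ℕ} {ω : (E →₀ W) →ₗ[ℝ] ℝ} {M : ℝ} (hM0 : 0 ≤ M)
    (hM : IsFormBound r ω M) : formNorm r ω ≤ M :=
  csInf_le ⟨0, fun _ h => h.1⟩ ⟨hM0, hM⟩

/- ## ambient space -/

section Ambient

variable {X : Type*} [SeminormedAddCommGroup X] [NormedSpace ℝ X]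

lemma exists_norming (J : X) (h : 0 < ‖J‖) : ∃ g : X →L[ℝ] ℝ, ‖g‖ ≤ 1 ∧ g J = ‖J‖ := by
  have hJ : (SeparationQuotient.mk J : SeparationQuotient X) ≠ 0 := by
    intro h0
    have := SeparationQuotient.norm_mk J
    rw [h0, norm_zero] at this
    linarith
  obtain ⟨g, hg1, hg2⟩ := exists_dual_vector ℝ (SeparationQuotient.mk J) (norm_ne_zero_iff.mpr hJ)
  refine ⟨g.comp (SeparationQuotient.mkCLM ℝ X), ?_, ?_⟩
  · calc ‖g.comp (SeparationQuotient.mkCLM ℝ X)‖ ≤ ‖g‖ * ‖SeparationQuotient.mkCLM ℝ X‖ :=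
      g.opNorm_comp_le _
    _ ≤ 1 * 1 := by
        rw [hg1]
        gcongr
        exact (SeparationQuotient.mkCLM ℝ X).opNorm_le_bound zero_le_one
          (by simp [SeparationQuotient.norm_mk])
    _ = 1 := by ring
  · simpa [SeparationQuotient.norm_mk] using hg2

variable (ι : (E →₀ W) →ₗ[ℝ] X)

lemma abs_apply_le_of_denseRange (hdense : DenseRange ι) {g : X →L[ℝ] ℝ} {F : ℝ}
    (h : ∀ A, |g (ι A)| ≤ F * ‖ι A‖) (x : X) : |g x| ≤ F * ‖x‖ := by
  have hclosed : IsClosed {x : X | |g x| ≤ F * ‖x‖} :=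
    isClosed_le (continuous_abs.comp g.continuous) (continuous_const.mul continuous_norm)
  have hsub : Set.range ι ⊆ {x : X | |g x| ≤ F * ‖x‖} := by
    rintro _ ⟨A, rfl⟩; exact h A
  have := hclosed.closure_subset_iff.mpr hsub
  exact this (hdense x)

lemma exists_extension_of_bound (η : (E →₀ W) →ₗ[ℝ] ℝ) {K : ℝ} (hK : 0 ≤ K)
    (h : ∀ A, |η A| ≤ K * ‖ι A‖) :
    ∃ g : X →L[ℝ] ℝ, (∀ A, g (ι A) = η A) ∧ ‖g‖ ≤ K := by
  have hker : LinearMap.ker ι ≤ LinearMap.ker η := by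
    intro A hA
    rw [LinearMap.mem_ker] at hA ⊢
    have := h A
    rw [hA, norm_zero, mul_zero] at this
    exact abs_eq_zero.mp (le_antisymm this (abs_nonneg _))
  set f0 : ↥(LinearMap.range ι) →ₗ[ℝ] ℝ :=
    ((LinearMap.ker ι).liftQ η hker).comp (ι.quotKerEquivRange.symm : _ →ₗ[ℝ] _) with hf0
  have heval : ∀ A : E →₀ W, f0 ⟨ι A, LinearMap.mem_range_self ι A⟩ = η A := by
    intro A
    have h1 : ι.quotKerEquivRange.symm ⟨ι A, LinearMap.mem_range_self ι A⟩
        = Submodule.Quotient.mk A := by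
      rw [LinearEquiv.symm_apply_eq]
      ext
      exact ι.quotKerEquivRange_apply_mk A
    simp only [hf0, LinearMap.comp_apply, LinearEquiv.coe_coe, h1, Submodule.liftQ_apply]
  have hb : ∀ y : ↥(LinearMap.range ι), ‖f0 y‖ ≤ K * ‖y‖ := by
    rintro ⟨y, hy⟩
    obtain ⟨A, rfl⟩ := hy
    rw [show (⟨ι A, ⟨A, rfl⟩⟩ : ↥(LinearMap.range ι)) = ⟨ι A, LinearMap.mem_range_self ι A⟩
      from rfl, heval A]
    exact h A
  set f := f0.mkContinuous K hb with hf
  obtain ⟨g, hg, hnorm⟩ := exists_extension_norm_eq (LinearMap.range ι) f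
  refine ⟨g, fun A => ?_, ?_⟩
  · rw [show ι A = (⟨ι A, LinearMap.mem_range_self ι A⟩ : ↥(LinearMap.range ι)) from rfl,
      hg ⟨ι A, LinearMap.mem_range_self ι A⟩]
    exact heval A
  · rw [hnorm]
    exact LinearMap.mkContinuous_norm_le f0 hK hb

end Ambient

/- ## spike interpolation (r = 0) -/

section Spike

lemma exists_separation (F : Finset E) :
    ∃ δ : ℝ, 0 < δ ∧ ∀ q ∈ F, ∀ q' ∈ F, q ≠ q' → 2 * δ ≤ dist q q' := by
  classical
  set D := ((F ×ˢ F).filter (fun x => x.1 ≠ x.2)).image (fun x => dist x.1 x.2) with hD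
  by_cases hne : D.Nonempty
  · refine ⟨D.min' hne / 2, ?_, ?_⟩
    · have hpos : ∀ x ∈ D, 0 < x := by
        intro x hx
        rw [hD] at hx
        simp only [Finset.mem_image, Finset.mem_filter, Finset.mem_product] at hx
        obtain ⟨⟨a, b⟩, ⟨-, hab⟩, h⟩ := hx
        rw [← h]
        exact dist_pos.mpr hab
      have := hpos _ (D.min'_mem hne)
      linarith
    · intro q hq q' hq' hne'
      have : dist q q' ∈ D := by
        rw [hD]
        simp only [Finset.mem_image, Finset.mem_filter, Finset.mem_product]
        exact ⟨(q, q'), ⟨⟨hq, hq'⟩, hne'⟩, rfl⟩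
      have := D.min'_le _ this
      linarith
  · refine ⟨1, zero_lt_one, fun q hq q' hq' hne' => absurd ?_ hne⟩
    exact ⟨dist q q', by
      rw [hD]
      simp only [Finset.mem_image, Finset.mem_filter, Finset.mem_product]
      exact ⟨(q, q'), ⟨⟨hq, hq'⟩, hne'⟩, rfl⟩⟩

variable (δ : ℝ)

/-- tent function of width `δ` at `q`. -/
def tent (q p : E) : ℝ := max (1 - dist p q / δ) 0

lemma tent_nonneg (q p : E) : 0 ≤ tent δ q p := le_max_right _ _

lemma tent_le_one {δ : ℝ} (hδ : 0 < δ) (q p : E) : tent δ q p ≤ 1 := by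
  rw [tent]
  apply max_le _ zero_le_one
  have : 0 ≤ dist p q / δ := div_nonneg dist_nonneg hδ.le
  linarith

lemma tent_self {δ : ℝ} (hδ : 0 < δ) (q : E) : tent δ q q = 1 := by
  simp [tent]

lemma tent_eq_zero {δ : ℝ} (hδ : 0 < δ) {q p : E} (h : δ ≤ dist p q) : tent δ q p = 0 := by
  rw [tent, max_eq_right]
  rw [sub_nonpos, le_div_iff₀ hδ, one_mul]
  exact h

lemma tent_lipschitz {δ : ℝ} (hδ : 0 < δ) (q p p' : E) :
    |tent δ q p - tent δ q p'| ≤ dist p p' / δ := by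
  have h1 : |tent δ q p - tent δ q p'| ≤ |(1 - dist p q / δ) - (1 - dist p' q / δ)| := by
    exact abs_max_sub_max_le_abs _ _ _
  have h2 : (1 - dist p q / δ) - (1 - dist p' q / δ) = (dist p' q - dist p q) / δ := by ring
  rw [h2] at h1
  refine h1.trans ?_
  rw [abs_div, abs_of_pos hδ]
  have h3 : |dist p' q - dist p q| ≤ dist p p' := by
    rw [dist_comm p p']
    exact abs_dist_sub_le p' p q
  gcongr

lemma tent_pos_dist {δ : ℝ} (hδ : 0 < δ) {q p : E} (h : tent δ q p ≠ 0) : dist p q < δ := by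
  by_contra hc
  exact h (tent_eq_zero hδ (not_lt.mp hc))

/-- at most one tent is active at `p`. -/
lemma sum_tentInd_le_one {δ : ℝ} (hδ : 0 < δ) {F : Finset E}
    (hsep : ∀ q ∈ F, ∀ q' ∈ F, q ≠ q' → 2 * δ ≤ dist q q') (p : E) :
    ∑ q ∈ F, (if tent δ q p = 0 then (0 : ℝ) else 1) ≤ 1 := by
  classical
  by_cases hex : ∃ q0 ∈ F, tent δ q0 p ≠ 0
  · obtain ⟨q0, hq0, hq0'⟩ := hex
    rw [Finset.sum_eq_single_of_mem q0 hq0]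
    · split <;> norm_num
    · intro q hq hne
      have hz : tent δ q p = 0 := by
        apply tent_eq_zero hδ
        have h1 := tent_pos_dist hδ hq0'
        have h2 := hsep q hq q0 hq0 hne
        have h3 := dist_triangle q p q0
        have h4 : dist q p = dist p q := dist_comm q p
        linarith
      simp [hz]
  · push_neg at hex
    rw [Finset.sum_eq_zero fun q hq => by simp [hex q hq]]
    norm_num

lemma sum_tent_le_one {δ : ℝ} (hδ : 0 < δ) {F : Finset E}
    (hsep : ∀ q ∈ F, ∀ q' ∈ F, q ≠ q' → 2 * δ ≤ dist q q') (p : E) :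
    ∑ q ∈ F, tent δ q p ≤ 1 := by
  classical
  refine le_trans (Finset.sum_le_sum fun q _ => ?_) (sum_tentInd_le_one hδ hsep p)
  by_cases h : tent δ q p = 0
  · rw [h]
    simp
  · rw [if_neg h]
    exact tent_le_one hδ q p

lemma sum_tent_diff_le {δ : ℝ} (hδ : 0 < δ) {F : Finset E}
    (hsep : ∀ q ∈ F, ∀ q' ∈ F, q ≠ q' → 2 * δ ≤ dist q q') (p u : E) :
    ∑ q ∈ F, |tent δ q (p + u) - tent δ q p| ≤ 2 * ‖u‖ / δ := by
  classical
  have key : ∀ q ∈ F, |tent δ q (p + u) - tent δ q p| ≤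
      (‖u‖ / δ) * ((if tent δ q (p + u) = 0 then (0:ℝ) else 1) +
        (if tent δ q p = 0 then (0:ℝ) else 1)) := by
    intro q _
    by_cases h1 : tent δ q (p + u) = 0 <;> by_cases h2 : tent δ q p = 0
    · simp [h1, h2]
    all_goals
      have hlip := tent_lipschitz hδ q (p + u) p
      rw [dist_eq_norm, add_sub_cancel_left] at hlip
      have h3 : (0:ℝ) ≤ ‖u‖ / δ := div_nonneg (norm_nonneg _) hδ.le
      have hge : (1:ℝ) ≤ (if tent δ q (p + u) = 0 then (0:ℝ) else 1) +
          (if tent δ q p = 0 then (0:ℝ) else 1) := by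
        simp only [h1, h2, if_true, if_false]
        norm_num
      nlinarith
  refine (Finset.sum_le_sum key).trans ?_
  rw [← Finset.mul_sum, Finset.sum_add_distrib]
  have h1 := sum_tentInd_le_one hδ hsep (p + u)
  have h2 := sum_tentInd_le_one hδ hsep p
  have h3 : (0:ℝ) ≤ ‖u‖ / δ := div_nonneg (norm_nonneg _) hδ.le
  calc ‖u‖ / δ * (∑ q ∈ F, (if tent δ q (p+u) = 0 then (0:ℝ) else 1)
        + ∑ q ∈ F, (if tent δ q p = 0 then (0:ℝ) else 1))
      ≤ ‖u‖ / δ * (1 + 1) := by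
        apply mul_le_mul_of_nonneg_left _ h3
        exact add_le_add h1 h2
    _ = 2 * ‖u‖ / δ := by ring

end Spike

/- ## the spike form -/

section SpikeForm

variable (ω : (E →₀ W) →ₗ[ℝ] ℝ)

/-- interpolation of `ω` by tent functions centered at the points of `F`. -/
def spike (δ : ℝ) (F : Finset E) : (E →₀ W) →ₗ[ℝ] ℝ :=
  Finsupp.lsum ℝ (fun p => ∑ q ∈ F, tent δ q p • (ω.comp (Finsupp.lsingle q)))

lemma spike_single (δ : ℝ) (F : Finset E) (p : E) (α : W) :
    spike ω δ F (Finsupp.single p α) = ∑ q ∈ F, tent δ q p * ω (Finsupp.single q α) := by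
  rw [spike, Finsupp.lsum_single]
  simp [Finsupp.lsingle]

lemma abs_spike_single_le {δ : ℝ} (hδ : 0 < δ) {F : Finset E}
    (hsep : ∀ q ∈ F, ∀ q' ∈ F, q ≠ q' → 2 * δ ≤ dist q q')
    (hω : ∀ (q : E) (α : W), |ω (Finsupp.single q α)| ≤ ‖α‖) (p : E) (α : W) :
    |spike ω δ F (Finsupp.single p α)| ≤ ‖α‖ := by
  rw [spike_single]
  calc |∑ q ∈ F, tent δ q p * ω (Finsupp.single q α)|
      ≤ ∑ q ∈ F, |tent δ q p * ω (Finsupp.single q α)| := Finset.abs_sum_le_sum_abs _ _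
    _ ≤ ∑ q ∈ F, tent δ q p * ‖α‖ := by
        refine Finset.sum_le_sum fun q _ => ?_
        rw [abs_mul, abs_of_nonneg (tent_nonneg δ q p)]
        exact mul_le_mul_of_nonneg_left (hω q α) (tent_nonneg δ q p)
    _ = (∑ q ∈ F, tent δ q p) * ‖α‖ := by rw [Finset.sum_mul]
    _ ≤ 1 * ‖α‖ := by
        exact mul_le_mul_of_nonneg_right (sum_tent_le_one hδ hsep p) (norm_nonneg _)
    _ = ‖α‖ := one_mul _

lemma abs_spike_del_le {δ : ℝ} (hδ : 0 < δ) {F : Finset E}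
    (hsep : ∀ q ∈ F, ∀ q' ∈ F, q ≠ q' → 2 * δ ≤ dist q q')
    (hω : ∀ (q : E) (α : W), |ω (Finsupp.single q α)| ≤ ‖α‖) (u p : E) (α : W) :
    |spike ω δ F (del u (Finsupp.single p α))| ≤ (2 / δ) * ‖u‖ * ‖α‖ := by
  have hdel : del u (Finsupp.single p α) =
      Finsupp.single (p + u) α - Finsupp.single p α := by rw [del, transl_single]
  rw [hdel, map_sub, spike_single, spike_single, ← Finset.sum_sub_distrib]
  have : ∀ q ∈ F, tent δ q (p + u) * ω (Finsupp.single q α) - tent δ q p * ω (Finsupp.single q α)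
      = (tent δ q (p + u) - tent δ q p) * ω (Finsupp.single q α) := fun q _ => by ring
  rw [Finset.sum_congr rfl this]
  calc |∑ q ∈ F, (tent δ q (p + u) - tent δ q p) * ω (Finsupp.single q α)|
      ≤ ∑ q ∈ F, |(tent δ q (p + u) - tent δ q p)| * |ω (Finsupp.single q α)| := by
        refine (Finset.abs_sum_le_sum_abs _ _).trans (le_of_eq ?_)
        exact Finset.sum_congr rfl fun q _ => abs_mul _ _
    _ ≤ ∑ q ∈ F, |(tent δ q (p + u) - tent δ q p)| * ‖α‖ := by
        refine Finset.sum_le_sum fun q _ => ?_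
        exact mul_le_mul_of_nonneg_left (hω q α) (abs_nonneg _)
    _ = (∑ q ∈ F, |(tent δ q (p + u) - tent δ q p)|) * ‖α‖ := by rw [Finset.sum_mul]
    _ ≤ (2 * ‖u‖ / δ) * ‖α‖ :=
        mul_le_mul_of_nonneg_right (sum_tent_diff_le hδ hsep p u) (norm_nonneg _)
    _ = (2 / δ) * ‖u‖ * ‖α‖ := by ring

lemma spike_apply_self {δ : ℝ} (hδ : 0 < δ) {A : E →₀ W}
    (hsep : ∀ q ∈ A.support, ∀ q' ∈ A.support, q ≠ q' → 2 * δ ≤ dist q q') :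
    spike ω δ A.support A = ω A := by
  classical
  have happ : spike ω δ A.support A
      = ∑ p ∈ A.support, ∑ q ∈ A.support, tent δ q p * ω (Finsupp.single q (A p)) := by
    rw [spike, Finsupp.lsum_apply, Finsupp.sum]
    refine Finset.sum_congr rfl fun p hp => ?_
    simp [Finsupp.lsingle]
  rw [happ]
  have hinner : ∀ p ∈ A.support,
      ∑ q ∈ A.support, tent δ q p * ω (Finsupp.single q (A p)) = ω (Finsupp.single p (A p)) := by
    intro p hp
    rw [Finset.sum_eq_single_of_mem p hp]
    · rw [tent_self hδ, one_mul]
    · intro q hq hne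
      have h2 := hsep q hq p hp hne
      have hz : tent δ q p = 0 := tent_eq_zero hδ (by have := dist_comm q p; linarith)
      rw [hz, zero_mul]
  rw [Finset.sum_congr rfl hinner]
  conv_rhs => rw [← Finsupp.sum_single A]
  rw [Finsupp.sum, map_sum]

/-- Main lemma for the `r = 0` case. -/
lemma exists_spike_form (hω : IsFormBound 0 ω 1) (A : E →₀ W) :
    ∃ η : (E →₀ W) →ₗ[ℝ] ℝ, IsFormBound 0 η 1 ∧
      (∃ M, 0 ≤ M ∧ IsFormBound 1 η M) ∧ η A = ω A := by
  obtain ⟨δ, hδ, hsep⟩ := exists_separation A.support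
  have hω' : ∀ (q : E) (α : W), |ω (Finsupp.single q α)| ≤ ‖α‖ := by
    intro q α
    have := hω [] q α (by simp)
    simpa [diff, lnorm] using this
  refine ⟨spike ω δ A.support, ?_, ⟨1 + 2 / δ, ?_, ?_⟩, spike_apply_self ω hδ hsep⟩
  · intro σ p α hσ
    rw [List.length_eq_zero_iff.mp (Nat.le_zero.mp hσ)]
    simpa [diff, lnorm] using abs_spike_single_le ω hδ hsep hω' p α
  · positivity
  · intro σ p α hσ
    have h2δ : (0:ℝ) ≤ 2 / δ := by positivity
    match σ, hσ with
    | [], _ =>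
      simp only [diff, lnorm_nil, mul_one]
      refine (abs_spike_single_le ω hδ hsep hω' p α).trans ?_
      nlinarith [norm_nonneg α]
    | [u], _ =>
      have : diff [u] (Finsupp.single p α) = del u (Finsupp.single p α) := rfl
      rw [this, lnorm_cons, lnorm_nil, mul_one]
      refine (abs_spike_del_le ω hδ hsep hω' u p α).trans ?_
      have : (2 / δ) * ‖u‖ * ‖α‖ ≤ (1 + 2 / δ) * ‖u‖ * ‖α‖ := by
        nlinarith [norm_nonneg u, norm_nonneg α]
      linarith
    | u :: v :: τ, h => simp at h

end SpikeForm

/- ## averaging (mollification) -/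

section Avg

lemma transl_eq_sum (u : E) (A : E →₀ W) :
    transl u A = ∑ p ∈ A.support, Finsupp.single (p + u) (A p) := by
  rw [transl, Finsupp.mapDomain]
  rfl

lemma transl_smul (u : E) (s : ℝ) (A : E →₀ W) :
    transl u (s • A) = s • transl u A := Finsupp.mapDomain_smul _ _

/-- a Lipschitz-type hypothesis on `ω` in terms of unit differences. -/
def DelBound (ω : (E →₀ W) →ₗ[ℝ] ℝ) (M : ℝ) : Prop :=
  ∀ (v q : E) (β : W), |ω (del v (Finsupp.single q β))| ≤ M * ‖v‖ * ‖β‖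

lemma delBound_of_isFormBound {r : ℕ} {ω : (E →₀ W) →ₗ[ℝ] ℝ} {M : ℝ} (hr : 1 ≤ r)
    (hω : IsFormBound r ω M) : DelBound ω M := by
  intro v q β
  have := hω [v] q β (by simpa using hr)
  simpa [diff, lnorm] using this

lemma continuous_translApply {ω : (E →₀ W) →ₗ[ℝ] ℝ} {M : ℝ} (hM : 0 ≤ M)
    (hω : DelBound ω M) (e : E) (A : E →₀ W) :
    Continuous fun t : ℝ => ω (transl (t • e) A) := by
  have hrepr : (fun t : ℝ => ω (transl (t • e) A))
      = fun t => ∑ p ∈ A.support, ω (Finsupp.single (p + t • e) (A p)) := by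
    funext t
    rw [transl_eq_sum, map_sum]
  rw [hrepr]
  refine continuous_finset_sum _ fun p _ => ?_
  have hlip : LipschitzWith (Real.toNNReal (M * ‖e‖ * ‖A p‖))
      (fun t : ℝ => ω (Finsupp.single (p + t • e) (A p))) := by
    refine LipschitzWith.of_dist_le_mul fun t s => ?_
    have hdel : Finsupp.single (p + t • e) (A p) - Finsupp.single (p + s • e) (A p)
        = del ((t - s) • e) (Finsupp.single (p + s • e) (A p)) := by
      rw [del, transl_single]
      congr 2
      rw [sub_smul]
      abel
    rw [Real.dist_eq, ← map_sub, hdel]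
    refine (hω _ _ _).trans ?_
    rw [norm_smul, Real.norm_eq_abs]
    have h1 : M * ‖e‖ * ‖A p‖ ≤ (Real.toNNReal (M * ‖e‖ * ‖A p‖) : ℝ) :=
      Real.le_coe_toNNReal _
    have h2 : (0:ℝ) ≤ |t - s| := abs_nonneg _
    have : M * (|t - s| * ‖e‖) * ‖A p‖ = (M * ‖e‖ * ‖A p‖) * |t - s| := by ring
    rw [this, Real.dist_eq]
    exact mul_le_mul_of_nonneg_right h1 h2
  exact hlip.continuous

/-- the 1-dimensional average of `ω` in direction `e` over `[0, c]`. -/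
def avg (e : E) (c : ℝ) (ω : (E →₀ W) →ₗ[ℝ] ℝ)
    (hcont : ∀ A : E →₀ W, Continuous fun t : ℝ => ω (transl (t • e) A)) :
    (E →₀ W) →ₗ[ℝ] ℝ where
  toFun A := (1 / c) * ∫ t in (0:ℝ)..c, ω (transl (t • e) A)
  map_add' A B := by
    have hiA := (hcont A).intervalIntegrable (μ := MeasureTheory.volume) (a := (0:ℝ)) (b := c)
    have hiB := (hcont B).intervalIntegrable (μ := MeasureTheory.volume) (a := (0:ℝ)) (b := c)
    simp only [transl_add, map_add]
    rw [intervalIntegral.integral_add hiA hiB]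
    ring
  map_smul' s A := by
    simp only [transl_smul, map_smul, smul_eq_mul, RingHom.id_apply]
    rw [intervalIntegral.integral_const_mul]
    ring

lemma avg_apply (e : E) (c : ℝ) (ω : (E →₀ W) →ₗ[ℝ] ℝ) (hcont) (A : E →₀ W) :
    avg e c ω hcont A = (1 / c) * ∫ t in (0:ℝ)..c, ω (transl (t • e) A) := rfl

lemma avg_bound {e : E} {c : ℝ} {ω : (E →₀ W) →ₗ[ℝ] ℝ} {hcont} (hc : 0 < c)
    {σ : List E} {α : W} {B : ℝ}
    (hB : ∀ p : E, |ω (diff σ (Finsupp.single p α))| ≤ B) (p : E) :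
    |avg e c ω hcont (diff σ (Finsupp.single p α))| ≤ B := by
  rw [avg_apply, abs_mul, abs_of_pos (by positivity : (0:ℝ) < 1 / c)]
  have hbd : ∀ t ∈ Set.uIoc (0:ℝ) c, ‖ω (transl (t • e) (diff σ (Finsupp.single p α)))‖ ≤ B := by
    intro t _
    rw [transl_diff_single, Real.norm_eq_abs]
    exact hB _
  have hle := intervalIntegral.norm_integral_le_of_norm_le_const hbd
  rw [Real.norm_eq_abs, sub_zero, abs_of_pos hc] at hle
  calc (1 / c) * |∫ t in (0:ℝ)..c, ω (transl (t • e) (diff σ (Finsupp.single p α)))|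
      ≤ (1 / c) * (B * c) := by
        exact mul_le_mul_of_nonneg_left hle (by positivity)
    _ = B := by field_simp

lemma avg_smooth {e : E} {c : ℝ} {ω : (E →₀ W) →ₗ[ℝ] ℝ} {hcont} (hc : 0 < c)
    {σ : List E} {α : W} {B : ℝ}
    (hB : ∀ p : E, |ω (diff σ (Finsupp.single p α))| ≤ B) (s : ℝ) (p : E) :
    |avg e c ω hcont (del (s • e) (diff σ (Finsupp.single p α)))| ≤ (2 * |s| / c) * B := by
  set D := diff σ (Finsupp.single p α) with hD
  set f : ℝ → ℝ := fun t => ω (transl (t • e) D) with hf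
  have hfc : Continuous f := hcont D
  have hfb : ∀ t : ℝ, |f t| ≤ B := by
    intro t
    rw [hf]
    simp only
    rw [hD, transl_diff_single]
    exact hB _
  have hB0 : 0 ≤ B := le_trans (abs_nonneg _) (hfb 0)
  have h1 : avg e c ω hcont (del (s • e) D)
      = (1 / c) * ((∫ t in (0:ℝ)..c, f (t + s)) - ∫ t in (0:ℝ)..c, f t) := by
    rw [del, map_sub, avg_apply, avg_apply]
    have harg : ∀ t : ℝ, transl (t • e) (transl (s • e) D) = transl ((t + s) • e) D := by
      intro t
      rw [transl_transl, ← add_smul, add_comm s t]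
    have : (fun t : ℝ => ω (transl (t • e) (transl (s • e) D))) = fun t => f (t + s) := by
      funext t
      rw [harg t, hf]
    rw [this]
    ring
  have h2 : (∫ t in (0:ℝ)..c, f (t + s)) = ∫ t in s..(c + s), f t := by
    have := intervalIntegral.integral_comp_add_right (a := (0:ℝ)) (b := c) f s
    rwa [zero_add] at this
  have h3 : (∫ t in s..(c + s), f t) - (∫ t in (0:ℝ)..c, f t)
      = (∫ t in c..(c + s), f t) - ∫ t in (0:ℝ)..s, f t := by
    have i1 : (∫ t in s..c, f t) + (∫ t in c..(c+s), f t) = ∫ t in s..(c+s), f t :=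
      intervalIntegral.integral_add_adjacent_intervals
        (hfc.intervalIntegrable _ _) (hfc.intervalIntegrable _ _)
    have i2 : (∫ t in (0:ℝ)..s, f t) + (∫ t in s..c, f t) = ∫ t in (0:ℝ)..c, f t :=
      intervalIntegral.integral_add_adjacent_intervals
        (hfc.intervalIntegrable _ _) (hfc.intervalIntegrable _ _)
    linarith
  have h4 : |∫ t in c..(c + s), f t| ≤ B * |s| := by
    have := intervalIntegral.norm_integral_le_of_norm_le_const
      (C := B) (a := c) (b := c + s) (f := f) (fun t _ => by rw [Real.norm_eq_abs]; exact hfb t)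
    rw [Real.norm_eq_abs, add_sub_cancel_left] at this
    exact this
  have h5 : |∫ t in (0:ℝ)..s, f t| ≤ B * |s| := by
    have := intervalIntegral.norm_integral_le_of_norm_le_const
      (C := B) (a := (0:ℝ)) (b := s) (f := f) (fun t _ => by rw [Real.norm_eq_abs]; exact hfb t)
    rw [Real.norm_eq_abs, sub_zero] at this
    exact this
  rw [h1, h2, h3]
  rw [abs_mul, abs_of_pos (by positivity : (0:ℝ) < 1 / c)]
  calc (1/c) * |(∫ t in c..(c + s), f t) - ∫ t in (0:ℝ)..s, f t|
      ≤ (1/c) * (B * |s| + B * |s|) := by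
        refine mul_le_mul_of_nonneg_left ?_ (by positivity)
        exact (abs_sub _ _).trans (add_le_add h4 h5)
    _ = (2 * |s| / c) * B := by field_simp; ring
  
lemma avg_sub_self {e : E} {c : ℝ} {ω : (E →₀ W) →ₗ[ℝ] ℝ} {hcont} (hc : 0 < c)
    {M : ℝ} (hM : 0 ≤ M) (hω : DelBound ω M) (p : E) (α : W) :
    |avg e c ω hcont (Finsupp.single p α) - ω (Finsupp.single p α)| ≤ M * c * ‖e‖ * ‖α‖ := by
  have h1 : avg e c ω hcont (Finsupp.single p α) - ω (Finsupp.single p α)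
      = (1/c) * ∫ t in (0:ℝ)..c,
          (ω (transl (t • e) (Finsupp.single p α)) - ω (Finsupp.single p α)) := by
    rw [intervalIntegral.integral_sub ((hcont _).intervalIntegrable _ _)
      intervalIntegrable_const, intervalIntegral.integral_const, avg_apply]
    rw [sub_zero, smul_eq_mul]
    field_simp
  have hbd : ∀ t ∈ Set.uIoc (0:ℝ) c,
      ‖ω (transl (t • e) (Finsupp.single p α)) - ω (Finsupp.single p α)‖
        ≤ M * c * ‖e‖ * ‖α‖ := by
    intro t ht
    rw [Set.uIoc_of_le hc.le, Set.mem_Ioc] at ht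
    rw [Real.norm_eq_abs, ← map_sub]
    have hdel : transl (t • e) (Finsupp.single p α) - Finsupp.single p α
        = del (t • e) (Finsupp.single p α) := rfl
    rw [hdel]
    refine (hω _ _ _).trans ?_
    rw [norm_smul, Real.norm_eq_abs, abs_of_pos ht.1]
    have : M * (t * ‖e‖) * ‖α‖ = (M * ‖e‖ * ‖α‖) * t := by ring
    rw [this]
    have h2 : (M * ‖e‖ * ‖α‖) * t ≤ (M * ‖e‖ * ‖α‖) * c := by
      apply mul_le_mul_of_nonneg_left ht.2
      positivity
    linarith [h2]
  have hle := intervalIntegral.norm_integral_le_of_norm_le_const hbd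
  rw [Real.norm_eq_abs, sub_zero, abs_of_pos hc] at hle
  rw [h1, abs_mul, abs_of_pos (by positivity : (0:ℝ) < 1 / c)]
  calc (1/c) * |∫ t in (0:ℝ)..c,
        (ω (transl (t • e) (Finsupp.single p α)) - ω (Finsupp.single p α))|
      ≤ (1/c) * ((M * c * ‖e‖ * ‖α‖) * c) := mul_le_mul_of_nonneg_left hle (by positivity)
    _ = M * c * ‖e‖ * ‖α‖ := by field_simp

end Avg

/- ## iterated mollification -/

section Mollify

variable {r : ℕ}

def avgGood (hr : 1 ≤ r) (e : E) {c : ℝ} (hc : 0 < c)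
    (ω : {ω : (E →₀ W) →ₗ[ℝ] ℝ // IsFormBound r ω 1}) :
    {ω : (E →₀ W) →ₗ[ℝ] ℝ // IsFormBound r ω 1} :=
  ⟨avg e c ω.1 (continuous_translApply zero_le_one (delBound_of_isFormBound hr ω.2) e),
   fun σ p α hσ => avg_bound hc (fun q => ω.2 σ q α hσ) p⟩

def mollify (hr : 1 ≤ r) {c : ℝ} (hc : 0 < c) :
    List E → {ω : (E →₀ W) →ₗ[ℝ] ℝ // IsFormBound r ω 1}
      → {ω : (E →₀ W) →ₗ[ℝ] ℝ // IsFormBound r ω 1}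
  | [], ω => ω
  | e :: l, ω => avgGood hr e hc (mollify hr hc l ω)

lemma mollify_smooth (hr : 1 ≤ r) {c : ℝ} (hc : 0 < c) (l : List E)
    (ω : {ω : (E →₀ W) →ₗ[ℝ] ℝ // IsFormBound r ω 1}) {e : E} (he : e ∈ l) (s : ℝ)
    {σ : List E} (hσ : σ.length ≤ r) (α : W) :
    ∀ p : E, |(mollify hr hc l ω).1 (diff ((s • e) :: σ) (Finsupp.single p α))|
      ≤ (2 * |s| / c) * (lnorm σ * ‖α‖) := by
  induction l with
  | nil => simp at he
  | cons e0 l ih =>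
    intro p
    rcases List.mem_cons.mp he with rfl | he'
    · have hB : ∀ q : E, |(mollify hr hc l ω).1 (diff σ (Finsupp.single q α))|
          ≤ 1 * lnorm σ * ‖α‖ := fun q => (mollify hr hc l ω).2 σ q α hσ
      have h := avg_smooth (hcont := continuous_translApply zero_le_one
          (delBound_of_isFormBound hr (mollify hr hc l ω).2) e) hc hB s p
      have heq : (2 * |s| / c) * (1 * lnorm σ * ‖α‖) = (2 * |s| / c) * (lnorm σ * ‖α‖) := by
        ring
      rw [heq] at h
      exact h
    · exact avg_bound (hcont := continuous_translApply zero_le_one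
        (delBound_of_isFormBound hr (mollify hr hc l ω).2) e0) hc (fun q => ih he' q) p

lemma mollify_close (hr : 1 ≤ r) {c : ℝ} (hc : 0 < c) (l : List E)
    (hl : ∀ e ∈ l, ‖e‖ = 1)
    (ω : {ω : (E →₀ W) →ₗ[ℝ] ℝ // IsFormBound r ω 1}) (p : E) (α : W) :
    |(mollify hr hc l ω).1 (Finsupp.single p α) - ω.1 (Finsupp.single p α)|
      ≤ l.length * c * ‖α‖ := by
  induction l with
  | nil => simp [mollify]
  | cons e0 l ih =>
    have h1 := avg_sub_self (hcont := continuous_translApply zero_le_one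
        (delBound_of_isFormBound hr (mollify hr hc l ω).2) e0) hc zero_le_one
        (delBound_of_isFormBound hr (mollify hr hc l ω).2) p α
    have h2 := ih fun e he => hl e (List.mem_cons_of_mem _ he)
    have he0 : ‖e0‖ = 1 := hl e0 (List.mem_cons_self (a := e0) (l := l))
    rw [he0] at h1
    have htri : |(mollify hr hc (e0 :: l) ω).1 (Finsupp.single p α) - ω.1 (Finsupp.single p α)|
        ≤ |(mollify hr hc (e0 :: l) ω).1 (Finsupp.single p α)
            - (mollify hr hc l ω).1 (Finsupp.single p α)|
          + |(mollify hr hc l ω).1 (Finsupp.single p α) - ω.1 (Finsupp.single p α)| :=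
      abs_sub_le _ _ _
    have hstep : (mollify hr hc (e0 :: l) ω).1 = (avgGood hr e0 hc (mollify hr hc l ω)).1 := rfl
    rw [hstep] at htri
    have : |(avgGood hr e0 hc (mollify hr hc l ω)).1 (Finsupp.single p α)
        - (mollify hr hc l ω).1 (Finsupp.single p α)| ≤ 1 * c * 1 * ‖α‖ := h1
    have hlen : ((e0 :: l).length : ℝ) = l.length + 1 := by push_cast [List.length_cons]; ring
    calc |(mollify hr hc (e0 :: l) ω).1 (Finsupp.single p α) - ω.1 (Finsupp.single p α)|
        ≤ 1 * c * 1 * ‖α‖ + l.length * c * ‖α‖ := by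
          rw [hstep]
          exact htri.trans (add_le_add this h2)
      _ = (e0 :: l).length * c * ‖α‖ := by rw [hlen]; ring

lemma mollify_close_chain (hr : 1 ≤ r) {c : ℝ} (hc : 0 < c) (l : List E)
    (hl : ∀ e ∈ l, ‖e‖ = 1)
    (ω : {ω : (E →₀ W) →ₗ[ℝ] ℝ // IsFormBound r ω 1}) (A : E →₀ W) :
    |(mollify hr hc l ω).1 A - ω.1 A| ≤ l.length * c * ∑ p ∈ A.support, ‖A p‖ := by
  classical
  have hdec : ∀ (η : (E →₀ W) →ₗ[ℝ] ℝ), η A = ∑ p ∈ A.support, η (Finsupp.single p (A p)) := by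
    intro η
    conv_lhs => rw [← Finsupp.sum_single A]
    rw [Finsupp.sum, map_sum]
  rw [hdec (mollify hr hc l ω).1, hdec ω.1, ← Finset.sum_sub_distrib]
  calc |∑ p ∈ A.support, ((mollify hr hc l ω).1 (Finsupp.single p (A p))
        - ω.1 (Finsupp.single p (A p)))|
      ≤ ∑ p ∈ A.support, |(mollify hr hc l ω).1 (Finsupp.single p (A p))
        - ω.1 (Finsupp.single p (A p))| := Finset.abs_sum_le_sum_abs _ _
    _ ≤ ∑ p ∈ A.support, l.length * c * ‖A p‖ :=
        Finset.sum_le_sum fun p _ => mollify_close hr hc l hl ω p (A p)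
    _ = l.length * c * ∑ p ∈ A.support, ‖A p‖ := by rw [Finset.mul_sum]

end Mollify

/- ## Euclidean specialization -/

section Euclid

variable {n : ℕ} {r : ℕ}

lemma euclid_decomp (u : EuclideanSpace ℝ (Fin n)) :
    u = ∑ i, u i • EuclideanSpace.single i (1:ℝ) := by
  ext j
  have h : (∑ i, u i • EuclideanSpace.single i (1:ℝ)) j
      = ∑ i, (u i • EuclideanSpace.single i (1:ℝ)) j :=
    by rw [WithLp.ofLp_sum]; exact Finset.sum_apply j Finset.univ _
  rw [h]
  simp [EuclideanSpace.single_apply]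

lemma euclid_coord_le (u : EuclideanSpace ℝ (Fin n)) (i : Fin n) : |u i| ≤ ‖u‖ := by
  rw [EuclideanSpace.norm_eq]
  have h1 : |u i| = Real.sqrt (‖u i‖^2) := by
    rw [Real.sqrt_sq_eq_abs, Real.norm_eq_abs, abs_abs]
  rw [h1]
  apply Real.sqrt_le_sqrt
  exact Finset.single_le_sum (f := fun j => ‖u j‖^2) (fun j _ => by positivity) (Finset.mem_univ i)

lemma del_zero (A : E →₀ W) : del (0 : E) A = 0 := by rw [del, transl_zero, sub_self]

lemma mollify_del_telescope (hr : 1 ≤ r) {c : ℝ} (hc : 0 < c)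
    (ω : {ω : (EuclideanSpace ℝ (Fin n) →₀ W) →ₗ[ℝ] ℝ // IsFormBound r ω 1})
    (u : EuclideanSpace ℝ (Fin n)) {σ : List (EuclideanSpace ℝ (Fin n))} (hσ : σ.length ≤ r)
    (α : W) (s : Finset (Fin n)) :
    ∀ p, |(mollify hr hc ((List.finRange n).map (fun i => EuclideanSpace.single i (1:ℝ))) ω).1
        (del (∑ i ∈ s, u i • EuclideanSpace.single i (1:ℝ))
          (diff σ (Finsupp.single p α)))|
      ≤ (2 / c) * (∑ i ∈ s, |u i|) * (lnorm σ * ‖α‖) := by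
  classical
  set l := (List.finRange n).map (fun i => EuclideanSpace.single i (1:ℝ)) with hl
  set η := (mollify hr hc l ω).1 with hη
  induction s using Finset.induction_on with
  | empty => simp [del_zero]
  | @insert a s ha ih =>
    intro p
    rw [Finset.sum_insert ha, del_add_vec, map_add]
    have hmem : EuclideanSpace.single a (1:ℝ) ∈ l := by
      rw [hl]
      exact List.mem_map.mpr ⟨a, List.mem_finRange a, rfl⟩
    have h1 : |η (del (u a • EuclideanSpace.single a (1:ℝ))
        (transl (∑ i ∈ s, u i • EuclideanSpace.single i (1:ℝ)) (diff σ (Finsupp.single p α))))|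
        ≤ (2 * |u a| / c) * (lnorm σ * ‖α‖) := by
      rw [transl_diff_single]
      exact mollify_smooth hr hc l ω hmem (u a) hσ α _
    have h2 := ih p
    calc |η (del (u a • EuclideanSpace.single a (1:ℝ))
          (transl (∑ i ∈ s, u i • EuclideanSpace.single i (1:ℝ)) (diff σ (Finsupp.single p α))))
        + η (del (∑ i ∈ s, u i • EuclideanSpace.single i (1:ℝ)) (diff σ (Finsupp.single p α)))|
        ≤ (2 * |u a| / c) * (lnorm σ * ‖α‖) + (2 / c) * (∑ i ∈ s, |u i|) * (lnorm σ * ‖α‖) :=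
          (abs_add_le _ _).trans (add_le_add h1 h2)
      _ = (2 / c) * (∑ i ∈ insert a s, |u i|) * (lnorm σ * ‖α‖) := by
          rw [Finset.sum_insert ha]
          ring

/-- Main lemma for the `r ≥ 1` case. -/
lemma exists_mollified_form (hr : 1 ≤ r)
    (ω : (EuclideanSpace ℝ (Fin n) →₀ W) →ₗ[ℝ] ℝ) (hω : IsFormBound r ω 1)
    (A : EuclideanSpace ℝ (Fin n) →₀ W) {ε : ℝ} (hε : 0 < ε) :
    ∃ η : (EuclideanSpace ℝ (Fin n) →₀ W) →ₗ[ℝ] ℝ, IsFormBound r η 1 ∧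
      (∃ M, 0 ≤ M ∧ IsFormBound (r + 1) η M) ∧ |η A - ω A| ≤ ε := by
  classical
  set mass := ∑ p ∈ A.support, ‖A p‖ with hmass
  have hmass0 : 0 ≤ mass := Finset.sum_nonneg fun p _ => norm_nonneg _
  set c := ε / (n * mass + 1) with hcdef
  have hc : 0 < c := by positivity
  set l := (List.finRange n).map (fun i => EuclideanSpace.single i (1:ℝ)) with hl
  have hlnorm : ∀ e ∈ l, ‖e‖ = 1 := by
    intro e he
    rw [hl] at he
    obtain ⟨i, -, rfl⟩ := List.mem_map.mp he
    rw [EuclideanSpace.norm_single, norm_one]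
  set Ω : {ω : (EuclideanSpace ℝ (Fin n) →₀ W) →ₗ[ℝ] ℝ // IsFormBound r ω 1} := ⟨ω, hω⟩
  set η := (mollify hr hc l Ω).1 with hη
  refine ⟨η, (mollify hr hc l Ω).2, ⟨1 + 2 * n / c, by positivity, ?_⟩, ?_⟩
  · intro σ p α hσ
    match σ, hσ with
    | [], _ =>
      have := (mollify hr hc l Ω).2 [] p α (by simp)
      refine this.trans ?_
      have h2 : (0:ℝ) ≤ lnorm ([] : List (EuclideanSpace ℝ (Fin n))) * ‖α‖ :=
        mul_nonneg (lnorm_nonneg _) (norm_nonneg _)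
      have h3 : (1:ℝ) ≤ 1 + 2 * n / c := by
        have : (0:ℝ) ≤ 2 * n / c := by positivity
        linarith
      rw [mul_assoc, mul_assoc]
      nlinarith
    | u :: σ', hσ =>
      have hσ' : σ'.length ≤ r := by
        simpa using Nat.succ_le_succ_iff.mp (by simpa [List.length_cons] using hσ)
      have hdiff : diff (u :: σ') (Finsupp.single p α)
          = del u (diff σ' (Finsupp.single p α)) := rfl
      have htel := mollify_del_telescope hr hc Ω u hσ' α Finset.univ p
      rw [← euclid_decomp u] at htel
      have hsum : ∑ i, |u i| ≤ n * ‖u‖ := by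
        calc ∑ i : Fin n, |u i| ≤ ∑ i : Fin n, ‖u‖ :=
            Finset.sum_le_sum fun i _ => euclid_coord_le u i
          _ = n * ‖u‖ := by rw [Finset.sum_const, Finset.card_univ, Fintype.card_fin,
            nsmul_eq_mul]
      rw [hdiff]
      refine htel.trans ?_
      rw [lnorm_cons]
      have hln : (0:ℝ) ≤ lnorm σ' * ‖α‖ := mul_nonneg (lnorm_nonneg _) (norm_nonneg _)
      have h1 : (2 / c) * (∑ i, |u i|) * (lnorm σ' * ‖α‖)
          ≤ (2 / c) * (n * ‖u‖) * (lnorm σ' * ‖α‖) := by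
        refine mul_le_mul_of_nonneg_right ?_ hln
        refine mul_le_mul_of_nonneg_left hsum (by positivity)
      refine h1.trans ?_
      have h2 : (0:ℝ) ≤ ‖u‖ := norm_nonneg u
      have h3 : (0:ℝ) < c := hc
      have key : (2 / c) * (n * ‖u‖) = (2 * n / c) * ‖u‖ := by ring
      rw [key]
      have h4 : (2 * n / c) * ‖u‖ ≤ (1 + 2 * n / c) * ‖u‖ := by
        refine mul_le_mul_of_nonneg_right ?_ h2
        have : (0:ℝ) ≤ 2 * n / c := by positivity
        linarith
      calc (2 * n / c) * ‖u‖ * (lnorm σ' * ‖α‖)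
          ≤ (1 + 2 * n / c) * ‖u‖ * (lnorm σ' * ‖α‖) := mul_le_mul_of_nonneg_right h4 hln
        _ = (1 + 2 * n / c) * (‖u‖ * lnorm σ') * ‖α‖ := by ring
  · have := mollify_close_chain hr hc l hlnorm Ω A
    have hlen : (l.length : ℝ) = n := by
      rw [hl, List.length_map, List.length_finRange]
    rw [hlen] at this
    refine this.trans ?_
    rw [hcdef, ← hmass]
    have hpos : (0:ℝ) < (n:ℝ) * mass + 1 := by positivity
    have heq : (n:ℝ) * (ε / ((n:ℝ) * mass + 1)) * mass
        = ε * (((n:ℝ) * mass) / ((n:ℝ) * mass + 1)) := by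
      field_simp
    rw [heq]
    have hle1 : ((n:ℝ) * mass) / ((n:ℝ) * mass + 1) ≤ 1 := by
      rw [div_le_one hpos]
      linarith
    calc ε * (((n:ℝ) * mass) / ((n:ℝ) * mass + 1)) ≤ ε * 1 :=
        mul_le_mul_of_nonneg_left hle1 hε.le
      _ = ε := mul_one ε
end Euclid

/- ## combined approximation lemma -/

lemma exists_smooth_approx {n r : ℕ} (ω : (EuclideanSpace ℝ (Fin n) →₀ W) →ₗ[ℝ] ℝ)
    (hω : IsFormBound r ω 1) (A : EuclideanSpace ℝ (Fin n) →₀ W) {ε : ℝ} (hε : 0 < ε) :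
    ∃ η : (EuclideanSpace ℝ (Fin n) →₀ W) →ₗ[ℝ] ℝ, IsFormBound r η 1 ∧
      (∃ M, 0 ≤ M ∧ IsFormBound (r + 1) η M) ∧ |η A - ω A| ≤ ε := by
  rcases Nat.eq_zero_or_pos r with rfl | hr
  · obtain ⟨η, h1, h2, h3⟩ := exists_spike_form ω hω A
    exact ⟨η, h1, h2, by rw [h3, sub_self, abs_zero]; exact hε.le⟩
  · exact exists_mollified_form hr ω hω A hε

/-- For a differential `k`-chain `J` in the completion `B̂_k^r`
(modeled as any space `X` containing the Dirac chains isometrically in the `B^r` norm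
as a dense subspace), the norm is attained by testing against forms of class `B^{r+1}`:
`‖J‖_{B^r} = sup{|ω(J)|/‖ω‖_{B^r} : 0 ≠ ω of class B^{r+1}}`. -/
theorem norm_eq_sup_over_smoother_forms {n : ℕ} {W : Type*}
    [NormedAddCommGroup W] [NormedSpace ℝ W] (r : ℕ)
    (X : Type*) [SeminormedAddCommGroup X] [NormedSpace ℝ X]
    (ι : ((EuclideanSpace ℝ (Fin n)) →₀ W) →ₗ[ℝ] X)
    (hiso : ∀ A, ‖ι A‖ = Bnorm r A) (hdense : DenseRange ι)
    (J : X) :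
    ‖J‖ = sSup {x : ℝ | ∃ g : X →L[ℝ] ℝ, g ≠ 0 ∧
      (∃ M, 0 ≤ M ∧ IsFormBound (r + 1) ((g : X →ₗ[ℝ] ℝ) ∘ₗ ι) M) ∧
      x = |g J| / formNorm r ((g : X →ₗ[ℝ] ℝ) ∘ₗ ι)} := by
  classical
  set S := {x : ℝ | ∃ g : X →L[ℝ] ℝ, g ≠ 0 ∧
      (∃ M, 0 ≤ M ∧ IsFormBound (r + 1) ((g : X →ₗ[ℝ] ℝ) ∘ₗ ι) M) ∧
      x = |g J| / formNorm r ((g : X →ₗ[ℝ] ℝ) ∘ₗ ι)} with hS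
  -- every element of S is bounded by the norm (valid for arbitrary J)
  have habs : ∀ (g : X →L[ℝ] ℝ),
      (∃ M, 0 ≤ M ∧ IsFormBound (r + 1) ((g : X →ₗ[ℝ] ℝ) ∘ₗ ι) M) →
      ∀ x : X, |g x| ≤ formNorm r ((g : X →ₗ[ℝ] ℝ) ∘ₗ ι) * ‖x‖ := by
    intro g ⟨M, hM0, hM⟩ x
    set ω := (g : X →ₗ[ℝ] ℝ) ∘ₗ ι with hω
    have hne : ∃ M, 0 ≤ M ∧ IsFormBound r ω M :=
      ⟨M, hM0, isFormBound_anti (Nat.le_succ r) hM⟩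
    have hF0 : 0 ≤ formNorm r ω := formNorm_nonneg ω
    have hFb : IsFormBound r ω (formNorm r ω) := formNorm_isFormBound hne
    have hA : ∀ A, |g (ι A)| ≤ formNorm r ω * ‖ι A‖ := by
      intro A
      rw [hiso]
      exact abs_le_mul_Bnorm hF0 hFb A
    exact abs_apply_le_of_denseRange ι hdense hA x
  have hub : ∀ x ∈ S, x ≤ ‖J‖ := by
    rintro x ⟨g, hg0, hMex, rfl⟩
    set F := formNorm r ((g : X →ₗ[ℝ] ℝ) ∘ₗ ι) with hF
    have hF0 : 0 ≤ F := formNorm_nonneg _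
    have hJb : |g J| ≤ F * ‖J‖ := habs g hMex J
    rcases eq_or_lt_of_le hF0 with h0 | h0
    · rw [← h0, div_zero]
      exact norm_nonneg J
    · rw [div_le_iff₀ h0]
      calc |g J| ≤ F * ‖J‖ := hJb
        _ = ‖J‖ * F := by ring
  have hbdd : BddAbove S := ⟨‖J‖, hub⟩
  refine le_antisymm ?_ (Real.sSup_le hub (norm_nonneg J))
  -- lower bound
  rcases eq_or_lt_of_le (norm_nonneg J) with h0 | hJpos
  · rw [← h0]
    by_cases hSne : S.Nonempty
    · obtain ⟨x, hx⟩ := hSne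
      refine le_trans ?_ (le_csSup hbdd hx)
      obtain ⟨g, -, -, rfl⟩ := hx
      exact div_nonneg (abs_nonneg _) (formNorm_nonneg _)
    · rw [Set.not_nonempty_iff_eq_empty.mp hSne, Real.sSup_empty]
  · -- ‖J‖ > 0
    have key : ∀ ε : ℝ, 0 < ε → ε < ‖J‖ → ‖J‖ - ε ≤ sSup S := by
      intro ε hε hεJ
      have hε3 : 0 < ε / 4 := by positivity
      obtain ⟨A, hAJ⟩ := hdense.exists_dist_lt J hε3
      obtain ⟨g0, hg0norm, hg0J⟩ := exists_norming J hJpos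
      set ω0 := (g0 : X →ₗ[ℝ] ℝ) ∘ₗ ι with hω0
      have hω0b : IsFormBound r ω0 1 := by
        intro σ p α hσ
        have h1 : |g0 (ι (diff σ (Finsupp.single p α)))|
            ≤ ‖g0‖ * ‖ι (diff σ (Finsupp.single p α))‖ := by
          rw [← Real.norm_eq_abs]
          exact g0.le_opNorm _
        have h2 : ‖ι (diff σ (Finsupp.single p α))‖ ≤ lnorm σ * ‖α‖ := by
          rw [hiso]
          exact Bnorm_diff_single_le hσ p α
        calc |ω0 (diff σ (Finsupp.single p α))|
            ≤ ‖g0‖ * ‖ι (diff σ (Finsupp.single p α))‖ := h1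
          _ ≤ 1 * (lnorm σ * ‖α‖) := by
              apply mul_le_mul hg0norm h2 (norm_nonneg _) zero_le_one
          _ = 1 * lnorm σ * ‖α‖ := by ring
      obtain ⟨η, hη1, hη2, hη3⟩ := exists_smooth_approx ω0 hω0b A hε3
      have hηb : ∀ A', |η A'| ≤ 1 * ‖ι A'‖ := by
        intro A'
        rw [hiso]
        exact abs_le_mul_Bnorm zero_le_one hη1 A'
      obtain ⟨gh, hghι, hghnorm⟩ := exists_extension_of_bound ι η zero_le_one hηb
      have hcomp : ((gh : X →ₗ[ℝ] ℝ) ∘ₗ ι) = η := LinearMap.ext hghι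
      -- |gh J| is large
      have hd1 : |gh J - gh (ι A)| ≤ ε / 4 := by
        rw [← map_sub, ← Real.norm_eq_abs]
        calc ‖gh (J - ι A)‖ ≤ ‖gh‖ * ‖J - ι A‖ := gh.le_opNorm _
          _ ≤ 1 * (ε / 4) := by
              apply mul_le_mul hghnorm ?_ (norm_nonneg _) zero_le_one
              rw [← dist_eq_norm]
              exact hAJ.le
          _ = ε / 4 := one_mul _
      have hd2 : |gh (ι A) - g0 (ι A)| ≤ ε / 4 := by
        have : gh (ι A) = η A := hghι A
        rw [this]
        have : g0 (ι A) = ω0 A := rfl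
        rw [this]
        exact hη3
      have hd3 : |g0 (ι A) - g0 J| ≤ ε / 4 := by
        rw [← map_sub, ← Real.norm_eq_abs]
        calc ‖g0 (ι A - J)‖ ≤ ‖g0‖ * ‖ι A - J‖ := g0.le_opNorm _
          _ ≤ 1 * (ε / 4) := by
              apply mul_le_mul hg0norm ?_ (norm_nonneg _) zero_le_one
              rw [← dist_eq_norm, dist_comm]
              exact hAJ.le
          _ = ε / 4 := one_mul _
      have hghJ : ‖J‖ - 3 * (ε / 4) ≤ gh J := by
        have h1 : |gh J - g0 J| ≤ 3 * (ε / 4) := by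
          calc |gh J - g0 J| = |(gh J - gh (ι A)) + (gh (ι A) - g0 (ι A)) + (g0 (ι A) - g0 J)| :=
              by ring_nf
            _ ≤ |(gh J - gh (ι A)) + (gh (ι A) - g0 (ι A))| + |g0 (ι A) - g0 J| := abs_add_le _ _
            _ ≤ |gh J - gh (ι A)| + |gh (ι A) - g0 (ι A)| + |g0 (ι A) - g0 J| := by
                have := abs_add_le (gh J - gh (ι A)) (gh (ι A) - g0 (ι A))
                linarith
            _ ≤ 3 * (ε / 4) := by linarith
        have h2 := abs_le.mp h1
        linarith [hg0J ▸ h2.1]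
      have hghJpos : 0 < gh J := by
        have : ‖J‖ - 3 * (ε / 4) > 0 := by linarith
        linarith
      have hghJabs : ‖J‖ - ε ≤ |gh J| := by
        rw [abs_of_pos hghJpos]
        linarith
      -- gh ≠ 0
      have hgh0 : gh ≠ 0 := by
        intro h
        rw [h] at hghJpos
        simp at hghJpos
      -- formNorm bounds
      set F := formNorm r ((gh : X →ₗ[ℝ] ℝ) ∘ₗ ι) with hFdef
      have hFle1 : F ≤ 1 := by
        rw [hFdef, hcomp]
        exact formNorm_le zero_le_one hη1
      have hMex : ∃ M, 0 ≤ M ∧ IsFormBound (r + 1) ((gh : X →ₗ[ℝ] ℝ) ∘ₗ ι) M := by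
        rw [hcomp]
        exact hη2
      have hFpos : 0 < F := by
        by_contra hc
        push_neg at hc
        have hF0 : F = 0 := le_antisymm hc (formNorm_nonneg _)
        have := habs gh hMex J
        rw [← hFdef, hF0, zero_mul] at this
        have : |gh J| = 0 := le_antisymm this (abs_nonneg _)
        rw [abs_of_pos hghJpos] at this
        linarith
      have hmem : |gh J| / F ∈ S := ⟨gh, hgh0, hMex, rfl⟩
      have hxge : ‖J‖ - ε ≤ |gh J| / F := by
        have h1 : |gh J| ≤ |gh J| / F := by
          rw [le_div_iff₀ hFpos]
          calc |gh J| * F ≤ |gh J| * 1 := mul_le_mul_of_nonneg_left hFle1 (abs_nonneg _)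
            _ = |gh J| := mul_one _
        linarith
      exact hxge.trans (le_csSup hbdd hmem)
    refine le_of_forall_pos_le_add fun ε hε => ?_
    set ε' := min (ε / 2) (‖J‖ / 2) with hε'
    have hε'pos : 0 < ε' := lt_min (by positivity) (by positivity)
    have hε'J : ε' < ‖J‖ := (min_le_right _ _).trans_lt (by linarith)
    have := key ε' hε'pos hε'J
    have hε'ε : ε' ≤ ε / 2 := min_le_left _ _
    linarith
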